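/- Suppose the price is linear, p(g) = β·g + b with β > 0 and b ≥ 0 (so C(g) = β·g² + b·g and C'(g) = 2β·g + b). Suppose all consumers share a common valuation v that is differentiable, concave and non-decreasing with v' continuous at 0 and v'(0) > b. For each N ≥ 1 let ξ̄_N > 0 satisfy the symmetric Nash-equilibrium condition v'(ξ̄_N) = β(N+1)·ξ̄_N + b, and let μ̄_N > 0 satisfy the symmetric optimality condition v'(μ̄_N) = 2βN·μ̄_N + b. Then the ratio of the Nash-equilibrium total demand to the optimal total demand converges to 2: (N·ξ̄_N)/(N·μ̄_N) = ξ̄_N/μ̄_N → 2 as N → ∞. -/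
import Mathlib


open Finset Set

/-- With a linear price `p(g) = β·g + b` and a common valuation
`v` with `v'` continuous at `0` and `v'(0) > b`, the symmetric Nash demands
`ξ̄_N` (solving `v'(ξ̄_N) = β(N+1)ξ̄_N + b`) and symmetric optimal demands
`μ̄_N` (solving `v'(μ̄_N) = 2βN·μ̄_N + b`) satisfy `ξ̄_N/μ̄_N → 2`. -/
theorem statement_5
    (β b : ℝ) (hβ : 0 < β) (hb : 0 ≤ b)
    (v v' : ℝ → ℝ)
    (hv_deriv : ∀ x, HasDerivAt v (v' x) x)
    (hv_concave : ConcaveOn ℝ (Ici (0 : ℝ)) v)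
    (hv_mono : MonotoneOn v (Ici (0 : ℝ)))
    (hv0 : v 0 = 0)
    (hv'_cont : ContinuousAt v' 0)
    (hv'0 : b < v' 0)
    (ξ μ : ℕ → ℝ)
    (hξ_pos : ∀ N : ℕ, 1 ≤ N → 0 < ξ N)
    (hμ_pos : ∀ N : ℕ, 1 ≤ N → 0 < μ N)
    (hξ_eq : ∀ N : ℕ, 1 ≤ N → v' (ξ N) = β * ((N : ℝ) + 1) * ξ N + b)
    (hμ_eq : ∀ N : ℕ, 1 ≤ N → v' (μ N) = 2 * β * (N : ℝ) * μ N + b) :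
    Filter.Tendsto (fun N : ℕ => ξ N / μ N) Filter.atTop (nhds 2) := by
  -- v' is antitone on [0,∞), so v'(x) ≤ v'(0) for x ≥ 0
  have hderiv : deriv v = v' := funext fun x => (hv_deriv x).deriv
  have hanti : AntitoneOn v' (Ici (0:ℝ)) := by
    have h := hv_concave.antitoneOn_deriv (fun x _ => (hv_deriv x).differentiableAt)
    rwa [hderiv] at h
  have hbound : ∀ x : ℝ, 0 ≤ x → v' x ≤ v' 0 :=
    fun x hx => hanti (le_refl (0:ℝ)) hx hx
  -- ξ and μ tend to 0
  have hc : 0 < v' 0 - b := sub_pos.mpr hv'0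
  have hNplus : Filter.Tendsto (fun N : ℕ => β * ((N:ℝ)+1)) Filter.atTop Filter.atTop := by
    apply Filter.Tendsto.const_mul_atTop hβ
    exact Filter.tendsto_atTop_add_const_right _ 1 tendsto_natCast_atTop_atTop
  have h2N : Filter.Tendsto (fun N : ℕ => 2 * β * (N:ℝ)) Filter.atTop Filter.atTop := by
    apply Filter.Tendsto.const_mul_atTop (by linarith)
    exact tendsto_natCast_atTop_atTop
  have hξ0 : Filter.Tendsto ξ Filter.atTop (nhds 0) := by
    apply tendsto_of_tendsto_of_tendsto_of_le_of_le'
      (tendsto_const_nhds) (Filter.Tendsto.div_atTop (tendsto_const_nhds (x := v' 0 - b)) hNplus)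
    · filter_upwards [Filter.eventually_ge_atTop 1] with N hN
      exact (hξ_pos N hN).le
    · filter_upwards [Filter.eventually_ge_atTop 1] with N hN
      have h1 := hξ_eq N hN
      have hxp := hξ_pos N hN
      have hBN : 0 < β * ((N:ℝ)+1) := by positivity
      rw [le_div_iff₀ hBN]
      have := hbound (ξ N) hxp.le
      nlinarith [this, h1]
  have hμ0 : Filter.Tendsto μ Filter.atTop (nhds 0) := by
    apply tendsto_of_tendsto_of_tendsto_of_le_of_le'
      (tendsto_const_nhds) (Filter.Tendsto.div_atTop (tendsto_const_nhds (x := v' 0 - b)) h2N)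
    · filter_upwards [Filter.eventually_ge_atTop 1] with N hN
      exact (hμ_pos N hN).le
    · filter_upwards [Filter.eventually_ge_atTop 1] with N hN
      have h1 := hμ_eq N hN
      have hxp := hμ_pos N hN
      have hN0 : (1:ℝ) ≤ (N:ℝ) := by exact_mod_cast hN
      have hBN : 0 < 2 * β * (N:ℝ) := by nlinarith
      rw [le_div_iff₀ hBN]
      have := hbound (μ N) hxp.le
      nlinarith [this, h1]
  have hvξ : Filter.Tendsto (fun N => v' (ξ N) - b) Filter.atTop (nhds (v' 0 - b)) :=
    ((hv'_cont.tendsto.comp hξ0).sub tendsto_const_nhds)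
  have hvμ : Filter.Tendsto (fun N => v' (μ N) - b) Filter.atTop (nhds (v' 0 - b)) :=
    ((hv'_cont.tendsto.comp hμ0).sub tendsto_const_nhds)
  have hratio : Filter.Tendsto (fun N : ℕ => (v' (ξ N) - b) / (v' (μ N) - b) * (2*(N:ℝ)/((N:ℝ)+1)))
      Filter.atTop (nhds 2) := by
    have hfrac : Filter.Tendsto (fun N : ℕ => 2*(N:ℝ)/((N:ℝ)+1)) Filter.atTop (nhds 2) := by
      have h := tendsto_natCast_div_add_atTop (𝕜 := ℝ) 1
      have h2 := h.const_mul 2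
      simp only [mul_one] at h2
      convert h2 using 2 with N
      ring
    have hdiv := hvξ.div hvμ hc.ne'
    have := hdiv.mul hfrac
    rwa [div_self hc.ne', one_mul] at this
  apply hratio.congr'
  filter_upwards [Filter.eventually_ge_atTop 1] with N hN
  have h1 := hξ_eq N hN
  have h2 := hμ_eq N hN
  have hμ' := (hμ_pos N hN).ne'
  have hN0 : (N:ℝ) ≠ 0 := by
    have : (1:ℝ) ≤ (N:ℝ) := by exact_mod_cast hN
    linarith
  have hN1 : (N:ℝ)+1 ≠ 0 := by positivity
  rw [h1, h2]
  field_simp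
  ring
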